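/- For the linear model f(x) = ∑ i, w i * x i + b, if the weights satisfy |w_{π(1)}| ≤ |w_{π(2)}| ≤ ... ≤ |w_{π(d)}| and VeriX traverses indices in the order π (least sensitive first), then the returned irrelevant set B is a maximum-cardinality irrelevant set: for any irrelevant set B', |B'| ≤ |B|. Equivalently, the returned explanation A has globally minimum cardinality among all robust explanations. -/

import Mathlib

def Irrelevant {d : ℕ} (f : (Fin d → ℝ) → ℝ) (x : Fin d → ℝ) (ε δ : ℝ)
    (B : Set (Fin d)) : Prop :=
  ∀ x' : Fin d → ℝ, (∀ i ∈ B, |x' i - x i| ≤ ε) → (∀ i ∉ B, x' i = x i) →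
    |f x' - f x| ≤ δ

def RobustExpl {d : ℕ} (f : (Fin d → ℝ) → ℝ) (x : Fin d → ℝ) (ε δ : ℝ)
    (A : Set (Fin d)) : Prop :=
  ∀ x' : Fin d → ℝ, (∀ i ∈ A, x' i = x i) → (∀ i ∉ A, |x' i - x i| ≤ ε) →
    |f x' - f x| ≤ δ

open scoped Classical in
noncomputable def verixB {d : ℕ} (f : (Fin d → ℝ) → ℝ) (x : Fin d → ℝ) (ε δ : ℝ)
    (π : List (Fin d)) : Finset (Fin d) :=
  π.foldl (fun B i => if Irrelevant f x ε δ ↑(insert i B) then insert i B else B) ∅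

lemma irr_iff {d : ℕ} (w : Fin d → ℝ) (b : ℝ) (x : Fin d → ℝ) (ε δ : ℝ)
    (hε : 0 < ε) (B : Finset (Fin d)) :
    Irrelevant (fun y => (∑ k, w k * y k) + b) x ε δ ↑B ↔ ∑ i ∈ B, ε * |w i| ≤ δ := by
  have key : ∀ x' : Fin d → ℝ, (∀ i ∉ (B:Set (Fin d)), x' i = x i) →
      ((fun y => (∑ k, w k * y k) + b) x' - (fun y => (∑ k, w k * y k) + b) x)
        = ∑ k ∈ B, w k * (x' k - x k) := by
    intro x' h0
    simp only
    rw [add_sub_add_right_eq_sub, ← Finset.sum_sub_distrib]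
    rw [← Finset.sum_subset (Finset.subset_univ B)]
    · exact Finset.sum_congr rfl (fun k _ => by ring)
    · intro k _ hk
      rw [h0 k (by simpa using hk)]; ring
  constructor
  · intro h
    set s : Fin d → ℝ := fun i => if w i < 0 then -1 else 1 with hs
    set x' : Fin d → ℝ := fun i => if i ∈ B then x i + ε * s i else x i with hx'
    have h0 : ∀ i ∉ (B : Set (Fin d)), x' i = x i := by
      intro i hi; simp only [hx']; rw [if_neg (by simpa using hi)]
    have h1 : ∀ i ∈ (B : Set (Fin d)), |x' i - x i| ≤ ε := by
      intro i hi
      simp only [hx']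
      rw [if_pos (by simpa using hi)]
      have : |s i| = 1 := by simp only [hs]; split <;> simp
      rw [add_sub_cancel_left, abs_mul, this, mul_one, abs_of_pos hε]
    have := h x' h1 h0
    rw [key x' h0] at this
    have hval : ∑ k ∈ B, w k * (x' k - x k) = ∑ k ∈ B, ε * |w k| := by
      apply Finset.sum_congr rfl
      intro k hk
      simp only [hx', if_pos hk, add_sub_cancel_left]
      simp only [hs]
      split <;> rename_i hw
      · rw [abs_of_neg hw]; ring
      · rw [abs_of_nonneg (not_lt.mp hw)]; ring
    rw [hval] at this
    exact le_trans (le_abs_self _) this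
  · intro h x' h1 h0
    rw [key x' h0]
    calc |∑ k ∈ B, w k * (x' k - x k)| ≤ ∑ k ∈ B, |w k * (x' k - x k)| :=
          Finset.abs_sum_le_sum_abs _ _
      _ ≤ ∑ k ∈ B, ε * |w k| := by
          apply Finset.sum_le_sum
          intro k hk
          rw [abs_mul, mul_comm]
          exact mul_le_mul_of_nonneg_right (h1 k hk) (abs_nonneg _)
      _ ≤ δ := h

section
variable {d : ℕ} (w : Fin d → ℝ) (b : ℝ) (x : Fin d → ℝ) (ε δ : ℝ)

open scoped Classical in
lemma card_le_foldl :
    ∀ (L : List (Fin d)) (B : Finset (Fin d)),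
      B.card ≤ (L.foldl (fun (B : Finset (Fin d)) i =>
        if Irrelevant (fun y => (∑ k, w k * y k) + b) x ε δ ↑(insert i B)
        then insert i B else B) B).card := by
  intro L
  induction L with
  | nil => intro B; simp
  | cons a L ih =>
    intro B
    simp only [List.foldl_cons]
    refine le_trans ?_ (ih _)
    split
    · exact Finset.card_le_card (Finset.subset_insert _ _)
    · exact le_rfl

open scoped Classical in
lemma foldl_card (hε : 0 < ε) :
    ∀ (L : List (Fin d)) (B : Finset (Fin d)), L.Nodup → (∀ i ∈ L, i ∉ B) →
      ∀ t, t ≤ L.length → (∑ i ∈ B ∪ (L.take t).toFinset, ε * |w i|) ≤ δ →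
        B.card + t ≤ (L.foldl (fun (B : Finset (Fin d)) i =>
          if Irrelevant (fun y => (∑ k, w k * y k) + b) x ε δ ↑(insert i B)
          then insert i B else B) B).card := by
  intro L
  induction L with
  | nil =>
    intro B _ _ t ht _
    have : t = 0 := by simpa using ht
    subst this
    simp
  | cons a L ih =>
    intro B hnd hdisj t ht hfeas
    have haB : a ∉ B := hdisj a (by simp)
    have haL : a ∉ L := (List.nodup_cons.mp hnd).1
    simp only [List.foldl_cons]
    rcases t with _ | s
    · simp only [Nat.add_zero]
      refine le_trans ?_ (card_le_foldl w b x ε δ L _)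
      split
      · exact Finset.card_le_card (Finset.subset_insert _ _)
      · exact le_rfl
    · 
      have hsub : insert a B ⊆ B ∪ ((a :: L).take (s+1)).toFinset := by
        intro i hi
        rcases Finset.mem_insert.mp hi with h | h
        · subst h; simp [List.take_succ_cons]
        · exact Finset.mem_union_left _ h
      have hins : (∑ i ∈ insert a B, ε * |w i|) ≤ δ := by
        refine le_trans (Finset.sum_le_sum_of_subset_of_nonneg hsub ?_) hfeas
        intro i _ _
        positivity
      split
      case isFalse hcond => exact absurd ((irr_iff w b x ε δ hε _).mpr hins) hcond
      case isTrue hcond =>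
      have heq : B ∪ ((a :: L).take (s+1)).toFinset = insert a B ∪ (L.take s).toFinset := by
        simp [List.take_succ_cons, Finset.union_insert, Finset.insert_union]
      rw [heq] at hfeas
      have hdisj2 : ∀ i ∈ L, i ∉ insert a B := by
        intro i hiL
        rw [Finset.mem_insert]
        push_neg
        exact ⟨fun h => haL (by rwa [h] at hiL), hdisj i (List.mem_cons_of_mem _ hiL)⟩
      have hlen : s ≤ L.length := by simpa using ht
      have := ih (insert a B) (List.nodup_cons.mp hnd).2 hdisj2 s hlen hfeas
      have hci : (insert a B).card = B.card + 1 := Finset.card_insert_of_notMem haB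
      have harith : B.card + (s+1) = (insert a B).card + s := by
        rw [hci]; ring
      exact le_of_eq_of_le harith this

lemma prefix_min (hε : 0 < ε) :
    ∀ (L : List (Fin d)), L.Nodup → L.Pairwise (fun i j => |w i| ≤ |w j|) →
      ∀ B' : Finset (Fin d), (∀ i ∈ B', i ∈ L) →
        ∑ i ∈ (L.take B'.card).toFinset, ε * |w i| ≤ ∑ i ∈ B', ε * |w i| := by
  intro L
  induction L with
  | nil =>
    intro _ _ B' hB'
    have : B' = ∅ := Finset.eq_empty_of_forall_notMem (fun i hi => by simpa using hB' i hi)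
    simp [this]
  | cons a L ih =>
    intro hnd hsorted B' hB'
    have haL : a ∉ L := (List.nodup_cons.mp hnd).1
    have hndL := (List.nodup_cons.mp hnd).2
    have hsL : L.Pairwise (fun i j => |w i| ≤ |w j|) := hsorted.of_cons
    by_cases haB : a ∈ B'
    · have hpos : 0 < B'.card := Finset.card_pos.mpr ⟨a, haB⟩
      have hcard : B'.card = (B'.erase a).card + 1 := by
        rw [Finset.card_erase_of_mem haB]; omega
      rw [hcard, List.take_succ_cons, List.toFinset_cons]
      have hnotin : a ∉ (L.take (B'.erase a).card).toFinset := by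
        simp only [List.mem_toFinset]
        intro h; exact haL (List.mem_of_mem_take h)
      rw [Finset.sum_insert hnotin]
      have hsub : ∀ i ∈ B'.erase a, i ∈ L := by
        intro i hi
        rcases List.mem_cons.mp (hB' i (Finset.mem_of_mem_erase hi)) with h | h
        · exact absurd h (Finset.ne_of_mem_erase hi)
        · exact h
      have hih := ih hndL hsL (B'.erase a) hsub
      have hsum : ε * |w a| + ∑ i ∈ B'.erase a, ε * |w i| = ∑ i ∈ B', ε * |w i| :=
        Finset.add_sum_erase B' (fun i => ε * |w i|) haB
      linarith
    · have hBL : ∀ i ∈ B', i ∈ L := by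
        intro i hi
        rcases List.mem_cons.mp (hB' i hi) with h | h
        · exact absurd (h ▸ hi) haB
        · exact h
      have hih := ih hndL hsL B' hBL
      have hm : B'.card ≤ L.length := by
        have hsub : B' ⊆ L.toFinset := fun i hi => List.mem_toFinset.mpr (hBL i hi)
        calc B'.card ≤ L.toFinset.card := Finset.card_le_card hsub
          _ = L.length := List.toFinset_card_of_nodup hndL
      refine le_trans ?_ hih
      match hc : B'.card with
      | 0 => simp
      | Nat.succ s =>
        have hs : s < L.length := by omega
        rw [List.take_succ_cons, List.toFinset_cons]
        have hnotin : a ∉ (L.take s).toFinset := by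
          simp only [List.mem_toFinset]
          intro h; exact haL (List.mem_of_mem_take h)
        rw [Finset.sum_insert hnotin]
        have htake : (L.take (s+1)).toFinset = insert (L[s]'hs) (L.take s).toFinset := by
          rw [← List.take_concat_get' L s hs, List.toFinset_append]
          ext i
          simp [or_comm]
        have hnd2 : (L.take s ++ [L[s]'hs]).Nodup := by
          rw [List.take_concat_get' L s hs]
          exact hndL.sublist (List.take_sublist _ _)
        have hgnotin : (L[s]'hs) ∉ (L.take s).toFinset := by
          simp only [List.mem_toFinset]
          intro h
          exact (List.nodup_append'.mp hnd2).2.2 h (by simp)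
        rw [htake, Finset.sum_insert hgnotin]
        have hle : |w a| ≤ |w (L[s]'hs)| :=
          List.rel_of_pairwise_cons hsorted (List.getElem_mem hs)
        have : ε * |w a| ≤ ε * |w (L[s]'hs)| :=
          mul_le_mul_of_nonneg_left hle (le_of_lt hε)
        linarith
end


theorem stmt16 {d : ℕ} (w : Fin d → ℝ) (b : ℝ) (x : Fin d → ℝ) (ε δ : ℝ)
    (hε : 0 < ε) (π : List (Fin d)) (hnodup : π.Nodup) (hall : ∀ i : Fin d, i ∈ π)
    (hsorted : π.Pairwise (fun i j => |w i| ≤ |w j|)) :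
    ∀ B' : Finset (Fin d),
      Irrelevant (fun y => (∑ k, w k * y k) + b) x ε δ ↑B' →
        B'.card ≤ (verixB (fun y => (∑ k, w k * y k) + b) x ε δ π).card := by
  intro B' hB'
  have hsum : ∑ i ∈ B', ε * |w i| ≤ δ := (irr_iff w b x ε δ hε B').mp hB'
  have huniv : π.toFinset = Finset.univ :=
    Finset.eq_univ_iff_forall.mpr (fun i => List.mem_toFinset.mpr (hall i))
  have hπlen : π.length = d := by
    calc π.length = π.toFinset.card := (List.toFinset_card_of_nodup hnodup).symm
      _ = d := by rw [huniv]; simp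
  have hm : B'.card ≤ π.length := by
    rw [hπlen]
    exact le_trans (Finset.card_le_univ B') (by simp)
  have hpref := prefix_min w ε hε π hnodup hsorted B' (fun i _ => hall i)
  have hfeas : ∑ i ∈ (∅ : Finset (Fin d)) ∪ (π.take B'.card).toFinset, ε * |w i| ≤ δ := by
    rw [Finset.empty_union]
    exact le_trans hpref hsum
  have := foldl_card w b x ε δ hε π ∅ hnodup (by simp) B'.card hm hfeas
  simpa [verixB] using this
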